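/- Let π be a context adaptive ordering family over Σ and let s and s' be primitive strings of the same length n over Σ with BWT*(s) = BWT*(s') (both computed with respect to π). If the row index of s in M*(s) equals the row index of s' in M*(s'), then s = s'. In other words, a primitive string is uniquely determined by its context adaptive BWT together with the position of the string itself in the sorted rotation matrix. -/

import Mathlib

/-- The cyclic rotation of `s` by `r`: `s[r+1..n] s[1..r]`. -/
def rot {α : Type*} (s : List α) (r : ℕ) : List α := s.drop r ++ s.take r

/-- A string is primitive if its cyclic rotations are pairwise distinct. -/
def IsPrimitive {α : Type*} (s : List α) : Prop :=
  ∀ r₁ r₂ : ℕ, r₁ < s.length → r₂ < s.length → rot s r₁ = rot s r₂ → r₁ = r₂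

/-- The context adaptive order induced by a family `π` of linear orders on the
alphabet, one for each string (context): `u ≺ v` iff, `x = u[1..k] = v[1..k]`
being the longest common prefix of `u` and `v`, the symbol `u[k+1]` is
`π x`-smaller than `v[k+1]`. -/
def caLt {α : Type*} (π : List α → LinearOrder α) (u v : List α) : Prop :=
  ∃ (k : ℕ) (hu : k < u.length) (hv : k < v.length),
    u.take k = v.take k ∧ (π (u.take k)).lt (u.get ⟨k, hu⟩) (v.get ⟨k, hv⟩)

/-- The matrix `M*(s)`: an enumeration of the cyclic rotations of `s`
listed in `≺`-increasing order; the `i`-th row is `row i`. -/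
structure SortedRotMatrix {α : Type*} (π : List α → LinearOrder α) (s : List α) where
  row : Fin s.length → List α
  row_is_rot : ∀ i, ∃ r : Fin s.length, row i = rot s (r : ℕ)
  rot_is_row : ∀ r : Fin s.length, ∃ i, row i = rot s (r : ℕ)
  sorted : ∀ i j : Fin s.length, i < j → caLt π (row i) (row j)

/-- `Rng M x`: the set of row indices of `M*(s)` whose row has `x` as a prefix. -/
def Rng {α : Type*} [DecidableEq α] {π : List α → LinearOrder α} {s : List α}
    (M : SortedRotMatrix π s) (x : List α) : Finset (Fin s.length) :=
  Finset.univ.filter (fun i => x <+: M.row i)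


section BwtProofAux

variable {α : Type*}

lemma rot_length (s : List α) (r : ℕ) : (rot s r).length = s.length := by
  simp [rot]; omega

lemma caLt_irrefl (π : List α → LinearOrder α) (u : List α) : ¬ caLt π u u := by
  rintro ⟨k, hu, hv, -, hlt⟩
  letI := π (u.take k)
  exact lt_irrefl _ hlt

lemma prefix_shift {t : List α} {c : α} {y : List α} (hy : y.length < t.length) :
    (c :: y) <+: t ↔ (y <+: t.rotate 1 ∧ (t.rotate 1).getLast? = some c) := by
  cases t with
  | nil => simp at hy
  | cons h t' =>
    have hrot : (h :: t').rotate 1 = t' ++ [h] := by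
      simpa using List.rotate_cons_succ t' h 0
    rw [hrot, List.getLast?_concat, List.cons_prefix_cons]
    simp only [List.length_cons] at hy
    have hyt : y.length ≤ t'.length := by omega
    constructor
    · rintro ⟨rfl, hyp⟩
      exact ⟨hyp.trans (List.prefix_append _ _), rfl⟩
    · rintro ⟨hyp, hc⟩
      obtain rfl : h = c := by injection hc
      refine ⟨rfl, ?_⟩
      have := List.prefix_iff_eq_take.mp hyp
      rw [List.take_append_of_le_length hyt] at this
      rw [this]
      exact List.take_prefix _ _

lemma getElem_eq_of_take_eq {l₁ l₂ : List α} {t m : ℕ} (h : l₁.take t = l₂.take t)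
    (hm : m < t) (h1 : m < l₁.length) (h2 : m < l₂.length) : l₁[m] = l₂[m] := by
  have e1 : (l₁.take t)[m]'(by rw [List.length_take]; omega) = l₁[m] := List.getElem_take
  have e2 : (l₂.take t)[m]'(by rw [List.length_take]; omega) = l₂[m] := List.getElem_take
  rw [← e1, ← e2]
  congr 1

lemma prefix_snoc {l x : List α} {c : α} {k : ℕ} (hx : x.length = k) (hk : k < l.length) :
    ((x ++ [c]) <+: l) ↔ (x <+: l ∧ l[k]'hk = c) := by
  rw [List.prefix_iff_eq_take (l₁ := x ++ [c]), List.prefix_iff_eq_take (l₁ := x)]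
  have hlen : (x ++ [c]).length = k + 1 := by simp [hx]
  rw [hlen, hx, ← List.take_concat_get hk, List.concat_eq_append]
  constructor
  · intro h
    obtain ⟨h1, h2⟩ := List.append_inj h (by simp [hx, List.length_take]; omega)
    refine ⟨h1, ?_⟩
    simpa using h2.symm
  · rintro ⟨h1, h2⟩
    rw [← h1, ← h2]

lemma count_map_list {β : Type*} [DecidableEq α] (f : β → α) (l : List β) (d : α) :
    (l.map f).count d = (l.filter (fun b => decide (f b = d))).length := by
  induction l with
  | nil => simp
  | cons b l ih =>
    by_cases h : f b = d <;> simp [List.count_cons, h, ih, List.filter_cons]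

lemma length_filter_finRange {n : ℕ} (p : Fin n → Prop) [DecidablePred p] :
    ((List.finRange n).filter (fun j => decide (p j))).length
      = (Finset.univ.filter p).card := by
  rw [Fin.univ_def]
  rfl

lemma card_filter_equiv {β γ : Type*} [Fintype β] [Fintype γ] (e : β ≃ γ)
    (p : γ → Prop) [DecidablePred p] :
    (Finset.univ.filter (fun b => p (e b))).card = (Finset.univ.filter p).card := by
  apply Finset.card_bij (fun b _ => e b)
  · intro a ha; simp only [Finset.mem_filter, Finset.mem_univ, true_and] at ha ⊢; exact ha
  · intro a _ b _ h; exact e.injective h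
  · intro c hc
    refine ⟨e.symm c, ?_, by simp⟩
    simp only [Finset.mem_filter, Finset.mem_univ, true_and] at hc ⊢
    simpa using hc


lemma sorted_col {α : Type*} [DecidableEq α] (π : List α → LinearOrder α) {n k : ℕ}
    (hkn : k < n) (A : Fin n → List α)
    (hAlen : ∀ i, (A i).length = n)
    (hAsort : ∀ i j, i < j → caLt π (A i) (A j)) (x : List α) (hxlen : x.length = k)
    (idx : List (Fin n)) (hpw : idx.Pairwise (· < ·)) (hmem : ∀ j ∈ idx, (A j).take k = x) :
    (idx.map (fun j => (A j)[k]'(by rw [hAlen]; exact hkn))).Pairwise (π x).le := by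
  rw [List.pairwise_map]
  refine hpw.imp_of_mem ?_
  intro a b ha hb hab
  have hxa := hmem a ha
  have hxb := hmem b hb
  obtain ⟨m, hu, hv, heq, hlt⟩ := hAsort a b hab
  simp only [List.get_eq_getElem] at hlt
  by_cases hfe : (A a)[k]'(by rw [hAlen]; exact hkn) = (A b)[k]'(by rw [hAlen]; exact hkn)
  · rw [hfe]
    exact (π x).le_refl _
  · have hmk : m = k := by
      rcases lt_trichotomy m k with h | h | h
      · exfalso
        have : (A a)[m]'hu = (A b)[m]'hv :=
          getElem_eq_of_take_eq (hxa.trans hxb.symm) h hu hv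
        rw [this] at hlt
        letI := π ((A a).take m)
        exact lt_irrefl _ hlt
      · exact h
      · exfalso
        apply hfe
        exact getElem_eq_of_take_eq heq h (by rw [hAlen]; exact hkn) (by rw [hAlen]; exact hkn)
    subst hmk
    rw [hxa] at hlt
    letI := π x
    exact le_of_lt hlt


lemma columns_eq {α : Type*} [Fintype α] [DecidableEq α] (π : List α → LinearOrder α) {n : ℕ}
    (A B : Fin n → List α)
    (hAlen : ∀ i, (A i).length = n) (hBlen : ∀ i, (B i).length = n)
    (hAsort : ∀ i j, i < j → caLt π (A i) (A j))
    (hBsort : ∀ i j, i < j → caLt π (B i) (B j))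
    (hrecA : ∀ (c : α) (y : List α), y.length < n →
      (Finset.univ.filter (fun i => (c :: y) <+: A i)).card
        = (Finset.univ.filter (fun j => y <+: A j ∧ (A j).getLast? = some c)).card)
    (hrecB : ∀ (c : α) (y : List α), y.length < n →
      (Finset.univ.filter (fun i => (c :: y) <+: B i)).card
        = (Finset.univ.filter (fun j => y <+: B j ∧ (B j).getLast? = some c)).card)
    (hbwt : ∀ i, (A i).getLast? = (B i).getLast?) :
    ∀ k, k ≤ n → ∀ i, (A i).take k = (B i).take k := by
  intro k
  induction k with
  | zero => simp
  | succ k IH =>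
    intro hk i
    have hkn : k < n := hk
    have IH' := IH (le_of_lt hkn)
    have hpref : ∀ y : List α, y.length = k → ∀ j, ((y <+: A j) ↔ (y <+: B j)) := by
      intro y hy j
      rw [List.prefix_iff_eq_take, List.prefix_iff_eq_take, hy, IH' j]
    have hcnt : ∀ z : List α, z.length = k + 1 →
        (Finset.univ.filter (fun j => z <+: A j)).card
          = (Finset.univ.filter (fun j => z <+: B j)).card := by
      intro z hz
      cases z with
      | nil => simp at hz
      | cons c y =>
        have hy : y.length = k := by simpa using hz
        rw [hrecA c y (by rw [hy]; exact hkn), hrecB c y (by rw [hy]; exact hkn)]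
        congr 1
        apply Finset.filter_congr
        intro j _
        rw [hpref y hy j, hbwt j]
    set x := (A i).take k with hxdef
    have hxB : (B i).take k = x := (IH' i).symm
    have hxlen : x.length = k := by
      rw [hxdef, List.length_take, hAlen]; omega
    have hgetA : ∀ j, k < (A j).length := fun j => by rw [hAlen]; exact hkn
    have hgetB : ∀ j, k < (B j).length := fun j => by rw [hBlen]; exact hkn
    let fA : Fin n → α := fun j => (A j)[k]'(hgetA j)
    let fB : Fin n → α := fun j => (B j)[k]'(hgetB j)
    let idx : List (Fin n) := (List.finRange n).filter (fun j => decide (x <+: A j))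
    have hidxB : idx = (List.finRange n).filter (fun j => decide (x <+: B j)) := by
      apply List.filter_congr
      intro j _
      simp only [decide_eq_decide]
      exact hpref x hxlen j
    have hpw : idx.Pairwise (· < ·) :=
      List.Pairwise.sublist List.filter_sublist (List.pairwise_lt_finRange n)
    have hmemA : ∀ j ∈ idx, (A j).take k = x := by
      intro j hj
      simp only [idx, List.mem_filter, decide_eq_true_eq] at hj
      have h := List.prefix_iff_eq_take.mp hj.2
      rw [hxlen] at h
      exact h.symm
    have hmemB : ∀ j ∈ idx, (B j).take k = x := by
      intro j hj
      simp only [idx, List.mem_filter, decide_eq_true_eq] at hj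
      have h := List.prefix_iff_eq_take.mp ((hpref x hxlen j).mp hj.2)
      rw [hxlen] at h
      exact h.symm
    -- counts
    have hcntA : ∀ d : α, (idx.map fA).count d
        = (Finset.univ.filter (fun j => (x ++ [d]) <+: A j)).card := by
      intro d
      rw [count_map_list, List.filter_filter]
      have hfc : ∀ a ∈ List.finRange n,
          (decide (fA a = d) && decide (x <+: A a)) = decide ((x ++ [d]) <+: A a) := by
        intro a _
        rw [Bool.and_comm, ← Bool.decide_and, decide_eq_decide]
        exact (prefix_snoc hxlen (hgetA a)).symm
      rw [List.filter_congr hfc]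
      exact length_filter_finRange _
    have hcntB : ∀ d : α, (idx.map fB).count d
        = (Finset.univ.filter (fun j => (x ++ [d]) <+: B j)).card := by
      intro d
      rw [hidxB, count_map_list, List.filter_filter]
      have hfc : ∀ a ∈ List.finRange n,
          (decide (fB a = d) && decide (x <+: B a)) = decide ((x ++ [d]) <+: B a) := by
        intro a _
        rw [Bool.and_comm, ← Bool.decide_and, decide_eq_decide]
        exact (prefix_snoc hxlen (hgetB a)).symm
      rw [List.filter_congr hfc]
      exact length_filter_finRange _
    have hperm : (idx.map fA).Perm (idx.map fB) := by
      rw [List.perm_iff_count]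
      intro d
      rw [hcntA d, hcntB d]
      exact hcnt (x ++ [d]) (by simp [hxlen])
    have hsortA := sorted_col π hkn A hAlen hAsort x hxlen idx hpw hmemA
    have hsortB := sorted_col π hkn B hBlen hBsort x hxlen idx hpw hmemB
    letI : IsAntisymm α (π x).le := ⟨fun a b h1 h2 => (π x).le_antisymm a b h1 h2⟩
    have heqmap : idx.map fA = idx.map fB :=
      List.Perm.eq_of_pairwise (fun a b _ _ h1 h2 => (π x).le_antisymm a b h1 h2) hsortA hsortB hperm
    have hiidx : i ∈ idx := by
      simp only [idx, List.mem_filter, List.mem_finRange, true_and, decide_eq_true_eq]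
      rw [hxdef]
      exact List.take_prefix k (A i)
    have hfi : fA i = fB i := List.map_eq_map_iff.mp heqmap i hiidx
    rw [← List.take_concat_get (hgetA i), ← List.take_concat_get (hgetB i)]
    rw [← hxdef, hxB]
    exact congrArg _ hfi

lemma matrix_rec {α : Type*} [DecidableEq α] (π : List α → LinearOrder α) (s : List α)
    (hp : IsPrimitive s) (M : SortedRotMatrix π s) (c : α) (y : List α)
    (hy : y.length < s.length) :
    (Finset.univ.filter (fun i => (c :: y) <+: M.row i)).card
      = (Finset.univ.filter (fun j => y <+: M.row j ∧ (M.row j).getLast? = some c)).card := by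
  have hnpos : 0 < s.length := lt_of_le_of_lt (Nat.zero_le _) hy
  haveI : NeZero s.length := ⟨hnpos.ne'⟩
  have hrowlen : ∀ i, (M.row i).length = s.length := fun i => by
    obtain ⟨r, hr⟩ := M.row_is_rot i; rw [hr, rot_length]
  have hrowinj : Function.Injective M.row := by
    intro a b hab
    by_contra hne
    rcases lt_or_gt_of_ne hne with h | h
    · have := M.sorted a b h; rw [hab] at this; exact caLt_irrefl π _ this
    · have := M.sorted b a h; rw [hab] at this; exact caLt_irrefl π _ this
  choose g hg using M.row_is_rot
  have hginj : Function.Injective g := by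
    intro a b hab
    apply hrowinj
    rw [hg a, hg b, hab]
  have hgbij : Function.Bijective g := Finite.injective_iff_bijective.mp hginj
  let e : Fin s.length ≃ Fin s.length := Equiv.ofBijective g hgbij
  let σ : Fin s.length ≃ Fin s.length := e.trans ((Equiv.addRight (1 : Fin s.length)).trans e.symm)
  have hrot_rotate : ∀ r : Fin s.length, rot s (r : ℕ) = s.rotate r := fun r =>
    (List.rotate_eq_drop_append_take (le_of_lt r.isLt)).symm
  have hσ : ∀ i, M.row (σ i) = (M.row i).rotate 1 := by
    intro i
    have h1 : g (σ i) = g i + 1 := by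
      show g (e.symm (e i + 1)) = g i + 1
      have h2 : g (e.symm (e i + 1)) = e (e.symm (e i + 1)) := rfl
      rw [h2, Equiv.apply_symm_apply]
      rfl
    have hval : ((g i + 1 : Fin s.length) : ℕ) = (((g i : ℕ) + 1) % s.length) := by
      rw [Fin.val_add, Fin.val_one']
      conv_rhs => rw [Nat.add_mod, Nat.mod_eq_of_lt (g i).isLt]
    rw [hg (σ i), h1, hrot_rotate, hval, hg i, hrot_rotate, List.rotate_rotate]
    rw [List.rotate_mod]
  have hpt : ∀ i, ((c :: y) <+: M.row i ↔
      (y <+: M.row (σ i) ∧ (M.row (σ i)).getLast? = some c)) := by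
    intro i
    rw [hσ i]
    exact prefix_shift (by rw [hrowlen]; exact hy)
  calc (Finset.univ.filter (fun i => (c :: y) <+: M.row i)).card
      = (Finset.univ.filter (fun i =>
          y <+: M.row (σ i) ∧ (M.row (σ i)).getLast? = some c)).card := by
        congr 1
        exact Finset.filter_congr (fun i _ => hpt i)
    _ = (Finset.univ.filter (fun j => y <+: M.row j ∧ (M.row j).getLast? = some c)).card := by
        have := card_filter_equiv σ (fun j => y <+: M.row j ∧ (M.row j).getLast? = some c)
        convert this using 2

end BwtProofAux

/-- A primitive string is uniquely determined by its context adaptive BWT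
together with the row index of the string itself in the sorted rotation
matrix: if `BWT*(s) = BWT*(s')` and the row indices of `s` in `M*(s)` and of
`s'` in `M*(s')` coincide, then `s = s'`. -/
theorem bwtStar_invertible {α : Type*} [Fintype α] [Nonempty α] [DecidableEq α]
    (π : List α → LinearOrder α) (s s' : List α) (hlen : s.length = s'.length)
    (hp : IsPrimitive s) (hp' : IsPrimitive s')
    (M : SortedRotMatrix π s) (M' : SortedRotMatrix π s')
    (hbwt : ∀ i : Fin s.length,
      (M.row i).getLast? = (M'.row (Fin.cast hlen i)).getLast?)
    (i : Fin s.length) (i' : Fin s'.length)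
    (hi : M.row i = s) (hi' : M'.row i' = s') (hii : (i : ℕ) = (i' : ℕ)) :
    s = s' := by
  have hAlen : ∀ j, (M.row j).length = s.length := fun j => by
    obtain ⟨r, hr⟩ := M.row_is_rot j; rw [hr, rot_length]
  let B : Fin s.length → List α := fun j => M'.row (Fin.cast hlen j)
  have hBlen : ∀ j, (B j).length = s.length := fun j => by
    obtain ⟨r, hr⟩ := M'.row_is_rot (Fin.cast hlen j)
    show (M'.row (Fin.cast hlen j)).length = s.length
    rw [hr, rot_length, hlen]
  have hBsort : ∀ a b : Fin s.length, a < b → caLt π (B a) (B b) := by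
    intro a b h
    exact M'.sorted _ _ h
  have hrecA := matrix_rec π s hp M
  have hrecB : ∀ (c : α) (y : List α), y.length < s.length →
      (Finset.univ.filter (fun i => (c :: y) <+: B i)).card
        = (Finset.univ.filter (fun j => y <+: B j ∧ (B j).getLast? = some c)).card := by
    intro c y hy
    have hmain := matrix_rec π s' hp' M' c y (by rw [← hlen]; exact hy)
    have h1 : (Finset.univ.filter (fun i : Fin s.length => (c :: y) <+: B i)).card
        = (Finset.univ.filter (fun i : Fin s'.length => (c :: y) <+: M'.row i)).card := by
      have := card_filter_equiv (finCongr hlen)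
        (fun i : Fin s'.length => (c :: y) <+: M'.row i)
      convert this using 2
      rfl
    have h2 : (Finset.univ.filter (fun j : Fin s.length =>
          y <+: B j ∧ (B j).getLast? = some c)).card
        = (Finset.univ.filter (fun j : Fin s'.length =>
          y <+: M'.row j ∧ (M'.row j).getLast? = some c)).card := by
      have := card_filter_equiv (finCongr hlen)
        (fun j : Fin s'.length => y <+: M'.row j ∧ (M'.row j).getLast? = some c)
      convert this using 2
      rfl
    rw [h1, h2, hmain]
  have key := columns_eq π M.row B hAlen hBlen M.sorted hBsort hrecA hrecB hbwt
    s.length le_rfl i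
  have hA : (M.row i).take s.length = M.row i :=
    List.take_of_length_le (le_of_eq (hAlen i))
  have hB : (B i).take s.length = B i :=
    List.take_of_length_le (le_of_eq (hBlen i))
  have hrow : M.row i = B i := by rw [← hA, ← hB, key]
  have hcast : Fin.cast hlen i = i' := by
    apply Fin.ext
    exact hii
  calc s = M.row i := hi.symm
    _ = B i := hrow
    _ = M'.row (Fin.cast hlen i) := rfl
    _ = M'.row i' := by rw [hcast]
    _ = s' := hi'
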